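/- Let V be a real M×N matrix of full column rank N, G(w) := Vᵀ·diag(w)·V, E(w) := −(1/N)·log(det G(w)) + Σᵢ wᵢ, K := {u ∈ ℝ^M : Vᵀ·diag(u)·V = 0}, π_K the Euclidean orthogonal projection onto K, and E_η(w) := E(w) + η·‖π_K w‖². Let S denote the set of minimizers of E over the nonnegative orthant and let ŵ* ∈ S be a point satisfying ‖π_K ŵ*‖² = min{‖π_K w‖² : w ∈ S}. If (η_n) is a strictly decreasing sequence of positive reals with η_n → 0 and w_n* is the (unique) minimizer of E_{η_n} over the nonnegative orthant, then the sequence (w_n*) converges to ŵ*. -/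

import Mathlib

open Matrix Filter

lemma aux_log_half {μ : ℝ} (hμ : 0 < μ) : Real.log μ / 2 ≤ Real.log ((1 + μ) / 2) := by
  have hs : 0 < Real.sqrt μ := Real.sqrt_pos.mpr hμ
  have hsq : Real.sqrt μ * Real.sqrt μ = μ := Real.mul_self_sqrt hμ.le
  have h1 : Real.sqrt μ ≤ (1 + μ) / 2 := by nlinarith [sq_nonneg (Real.sqrt μ - 1)]
  have := Real.log_le_log hs h1
  rwa [Real.log_sqrt hμ.le] at this

lemma aux_log_half_strict {μ : ℝ} (hμ : 0 < μ) (hne : μ ≠ 1) :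
    Real.log μ / 2 < Real.log ((1 + μ) / 2) := by
  have hs : 0 < Real.sqrt μ := Real.sqrt_pos.mpr hμ
  have hsq : Real.sqrt μ * Real.sqrt μ = μ := Real.mul_self_sqrt hμ.le
  have hsne : Real.sqrt μ ≠ 1 := by
    intro h; apply hne; rw [← hsq, h, mul_one]
  have h1 : Real.sqrt μ < (1 + μ) / 2 := by
    rcases lt_or_gt_of_ne hsne with h | h <;> nlinarith [sq_nonneg (Real.sqrt μ - 1)]
  have := Real.log_lt_log hs h1
  rwa [Real.log_sqrt hμ.le] at this

lemma aux_posDef_of_det {n : Type*} [Fintype n] [DecidableEq n] {A : Matrix n n ℝ}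
    (hA : A.PosSemidef) (hd : A.det ≠ 0) : A.PosDef := by
  exact hA.posDef_iff_det_ne_zero.mpr hd

open scoped MatrixOrder in
lemma aux_logdet {n : ℕ} {A B : Matrix (Fin n) (Fin n) ℝ} (hA : A.PosDef) (hB : B.PosDef) :
    0 < ((2⁻¹ : ℝ) • (A + B)).det ∧
    (Real.log A.det + Real.log B.det) / 2 ≤ Real.log ((2⁻¹ : ℝ) • (A + B)).det ∧
    ((Real.log A.det + Real.log B.det) / 2 = Real.log ((2⁻¹ : ℝ) • (A + B)).det → A = B) := by
  classical
  set R := CFC.sqrt A with hRdef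
  have hRR : R * R = A := CFC.sqrt_mul_sqrt_self A hA.posSemidef.nonneg
  have hRh : R.IsHermitian := (CFC.sqrt_nonneg A).posSemidef.1
  have hdetA : 0 < A.det := hA.det_pos
  have hAd : A.det = R.det * R.det := by rw [← hRR, det_mul]
  have hdetR : R.det ≠ 0 := by
    intro h; rw [h, mul_zero] at hAd; exact hdetA.ne' hAd
  have hRu : IsUnit R.det := isUnit_iff_ne_zero.mpr hdetR
  set Q := R⁻¹ with hQdef
  have hQR : Q * R = 1 := Matrix.nonsing_inv_mul R hRu
  have hRQ : R * Q = 1 := Matrix.mul_nonsing_inv R hRu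
  have hQh : Q.IsHermitian := hRh.inv
  set S := Q * B * Q with hSdef
  have hSpsd : S.PosSemidef := by
    have := hB.posSemidef.conjTranspose_mul_mul_same Q
    rwa [hQh] at this
  have hBS : R * S * R = B := by
    calc R * (Q * B * Q) * R = (R * Q) * B * (Q * R) := by noncomm_ring
    _ = B := by rw [hRQ, hQR, Matrix.one_mul, Matrix.mul_one]
  have hdetBS : B.det = A.det * S.det := by
    rw [← hBS, det_mul, det_mul, hAd]; ring
  have hdetSpos : 0 < S.det := by
    have h := hB.det_pos
    rw [hdetBS] at h
    rcases mul_pos_iff.mp h with ⟨_, h2⟩ | ⟨h1, _⟩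
    · exact h2
    · linarith
  have hSpd : S.PosDef := aux_posDef_of_det hSpsd hdetSpos.ne'
  have hSh : S.IsHermitian := hSpsd.1
  set μ := hSh.eigenvalues with hμdef
  have hμpos : ∀ i, 0 < μ i := fun i => hSpd.eigenvalues_pos i
  have hsdet : S.det = ∏ i, μ i := by
    simpa using hSh.det_eq_prod_eigenvalues
  set U := (hSh.eigenvectorUnitary : Matrix (Fin n) (Fin n) ℝ) with hUdef
  have hU : U * star U = 1 := mem_unitaryGroup_iff.mp hSh.eigenvectorUnitary.2
  have hco : (RCLike.ofReal ∘ μ : Fin n → ℝ) = μ := by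
    funext i; simp
  have hspec : S = U * diagonal μ * star U := by
    have h := hSh.spectral_theorem
    rw [Unitary.conjStarAlgAut_apply] at h
    rwa [hco] at h
  have stage1 : (2⁻¹ : ℝ) • (A + B) = R * ((2⁻¹ : ℝ) • (1 + S)) * R := by
    rw [Matrix.mul_smul, Matrix.smul_mul]
    congr 1
    rw [Matrix.mul_add, Matrix.mul_one, Matrix.add_mul, hRR, hBS]
  have hdiag : diagonal (fun i => (1 + μ i) / 2) = (2⁻¹ : ℝ) • (1 + diagonal μ) := by
    ext i j
    by_cases h : i = j <;>
      [skip; skip] <;> simp [Matrix.diagonal_apply, Matrix.one_apply, h, Matrix.smul_apply] <;> ring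
  have stage3 : (2⁻¹ : ℝ) • (1 + S) = U * diagonal (fun i => (1 + μ i) / 2) * star U := by
    rw [hdiag]
    calc (2⁻¹ : ℝ) • (1 + S)
        = (2⁻¹ : ℝ) • (U * 1 * star U + U * diagonal μ * star U) := by
          rw [Matrix.mul_one, hU, ← hspec]
      _ = U * ((2⁻¹ : ℝ) • (1 + diagonal μ)) * star U := by
          rw [Matrix.mul_smul, Matrix.smul_mul, Matrix.mul_add, Matrix.add_mul, Matrix.mul_one]
  have hUdet : U.det * (star U).det = 1 := by rw [← det_mul, hU, det_one]
  have hdm : ∀ f : Fin n → ℝ, (U * diagonal f * star U).det = ∏ i, f i := by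
    intro f
    rw [det_mul, det_mul, det_diagonal]
    linear_combination (∏ i, f i) * hUdet
  have detmid : ((2⁻¹ : ℝ) • (A + B)).det = A.det * ∏ i, ((1 + μ i) / 2) := by
    rw [stage1, det_mul, det_mul, stage3, hdm, hAd]; ring
  have hfacpos : ∀ i ∈ Finset.univ, (0:ℝ) < (1 + μ i) / 2 := fun i _ => by
    have := hμpos i; linarith
  have hprodpos : 0 < ∏ i, ((1 + μ i) / 2) := Finset.prod_pos hfacpos
  have hmidpos : 0 < ((2⁻¹ : ℝ) • (A + B)).det := by
    rw [detmid]; exact mul_pos hdetA hprodpos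
  have hlogmid : Real.log ((2⁻¹ : ℝ) • (A + B)).det
      = Real.log A.det + ∑ i, Real.log ((1 + μ i) / 2) := by
    rw [detmid, Real.log_mul hdetA.ne' hprodpos.ne', Real.log_prod]
    exact fun i hi => (hfacpos i hi).ne'
  have hlogB : Real.log B.det = Real.log A.det + ∑ i, Real.log (μ i) := by
    rw [hdetBS, Real.log_mul hdetA.ne' hdetSpos.ne', hsdet, Real.log_prod]
    exact fun i _ => (hμpos i).ne'
  have hsumle : ∑ i, Real.log (μ i) / 2 ≤ ∑ i, Real.log ((1 + μ i) / 2) :=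
    Finset.sum_le_sum fun i _ => aux_log_half (hμpos i)
  have hsd : ∑ i, Real.log (μ i) / 2 = (∑ i, Real.log (μ i)) / 2 := by
    rw [Finset.sum_div]
  refine ⟨hmidpos, ?_, ?_⟩
  · rw [hlogmid, hlogB]
    linarith
  · intro heq
    rw [hlogmid, hlogB] at heq
    have hsumeq : ∑ i, Real.log (μ i) / 2 = ∑ i, Real.log ((1 + μ i) / 2) := by
      linarith
    have hμ1 : ∀ i, μ i = 1 := by
      by_contra hcon
      push_neg at hcon
      obtain ⟨i, hi⟩ := hcon
      have : ∑ j, Real.log (μ j) / 2 < ∑ j, Real.log ((1 + μ j) / 2) :=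
        Finset.sum_lt_sum (fun j _ => aux_log_half (hμpos j))
          ⟨i, Finset.mem_univ i, aux_log_half_strict (hμpos i) hi⟩
      linarith
    have hS1 : S = 1 := by
      rw [hspec, show μ = fun _ => (1:ℝ) from funext hμ1]
      rw [show (diagonal fun _ : Fin n => (1:ℝ)) = 1 from Matrix.diagonal_one, Matrix.mul_one, hU]
    rw [← hBS, hS1, Matrix.mul_one, hRR]

lemma aux_norm_le_sum {M : ℕ} (v : EuclideanSpace ℝ (Fin M)) (hv : ∀ i, 0 ≤ v i) :
    ‖v‖ ≤ ∑ i, v i := by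
  have hT : 0 ≤ ∑ i, v i := Finset.sum_nonneg fun i _ => hv i
  have key : ∑ i, ‖v i‖ ^ 2 ≤ (∑ i, v i) ^ 2 := by
    have h1 : ∀ i ∈ Finset.univ, ‖v i‖ ^ 2 ≤ v i * ∑ j, v j := by
      intro i _
      rw [Real.norm_eq_abs, sq_abs]
      have h2 : v i ≤ ∑ j, v j := Finset.single_le_sum (fun j _ => hv j) (Finset.mem_univ i)
      nlinarith [hv i]
    calc ∑ i, ‖v i‖ ^ 2 ≤ ∑ i, v i * ∑ j, v j := Finset.sum_le_sum h1
      _ = (∑ i, v i) ^ 2 := by rw [← Finset.sum_mul]; ring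
  rw [EuclideanSpace.norm_eq]
  calc Real.sqrt (∑ i, ‖v i‖ ^ 2) ≤ Real.sqrt ((∑ i, v i) ^ 2) := Real.sqrt_le_sqrt key
    _ = ∑ i, v i := Real.sqrt_sq hT

lemma aux_diag_comb {M : ℕ} (f g : Fin M → ℝ) (c d : ℝ) :
    Matrix.diagonal (fun i => c * f i + d * g i)
      = c • Matrix.diagonal f + d • Matrix.diagonal g := by
  ext i j
  by_cases h : i = j <;> simp [Matrix.diagonal_apply, h]

set_option maxHeartbeats 1000000 in
theorem stmt_11 (M N : ℕ) (hN : 0 < N) (hMN : N ≤ M)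
    (V : Matrix (Fin M) (Fin N) ℝ) (hV : V.rank = N)
    (G : (Fin M → ℝ) → Matrix (Fin N) (Fin N) ℝ)
    (hG : ∀ w, G w = Vᵀ * diagonal w * V)
    (E : EuclideanSpace ℝ (Fin M) → ℝ)
    (hE : ∀ w, E w = -(1 / (N : ℝ)) * Real.log (G (fun i => w i)).det + ∑ i, w i)
    (K : Submodule ℝ (EuclideanSpace ℝ (Fin M)))
    (hK : ∀ u : EuclideanSpace ℝ (Fin M), u ∈ K ↔ Vᵀ * diagonal (fun i => u i) * V = 0)
    (Eη : ℝ → EuclideanSpace ℝ (Fin M) → ℝ)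
    (hEη : ∀ η w, Eη η w =
      E w + η * ‖(K.orthogonalProjectionOnto w : EuclideanSpace ℝ (Fin M))‖ ^ 2)
    -- ŵ* : a minimizer of E over the nonnegative orthant with minimal ‖π_K ·‖²
    (what : EuclideanSpace ℝ (Fin M))
    (hwhatmem : what ∈ {w : EuclideanSpace ℝ (Fin M) |
      (∀ i, 0 ≤ w i) ∧ 0 < (G (fun i => w i)).det})
    (hwhatmin : IsMinOn E {w : EuclideanSpace ℝ (Fin M) |
      (∀ i, 0 ≤ w i) ∧ 0 < (G (fun i => w i)).det} what)
    (hwhatproj : ∀ v ∈ {w : EuclideanSpace ℝ (Fin M) |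
        (∀ i, 0 ≤ w i) ∧ 0 < (G (fun i => w i)).det},
      IsMinOn E {w : EuclideanSpace ℝ (Fin M) |
        (∀ i, 0 ≤ w i) ∧ 0 < (G (fun i => w i)).det} v →
      ‖(K.orthogonalProjectionOnto what : EuclideanSpace ℝ (Fin M))‖ ^ 2 ≤
        ‖(K.orthogonalProjectionOnto v : EuclideanSpace ℝ (Fin M))‖ ^ 2)
    -- the sequence of regularization parameters
    (η : ℕ → ℝ) (hηpos : ∀ n, 0 < η n) (hηanti : StrictAnti η)
    (hηlim : Tendsto η atTop (nhds 0))
    -- the minimizers of the regularized energies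
    (w : ℕ → EuclideanSpace ℝ (Fin M))
    (hwmem : ∀ n, w n ∈ {v : EuclideanSpace ℝ (Fin M) |
      (∀ i, 0 ≤ v i) ∧ 0 < (G (fun i => v i)).det})
    (hwmin : ∀ n, IsMinOn (Eη (η n)) {v : EuclideanSpace ℝ (Fin M) |
      (∀ i, 0 ≤ v i) ∧ 0 < (G (fun i => v i)).det} (w n)) :
    Tendsto w atTop (nhds what) := by
  classical
  haveI : Nonempty (Fin N) := ⟨⟨0, hN⟩⟩
  have hNpos : (0:ℝ) < N := by exact_mod_cast hN
  -- notation
  set fdet : EuclideanSpace ℝ (Fin M) → ℝ :=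
    fun v => (Vᵀ * diagonal (fun i => v i) * V).det with hfdet_def
  have hfd : ∀ v : EuclideanSpace ℝ (Fin M), (G fun i => v i).det = fdet v := fun v => by
    rw [hG]
  set pf : EuclideanSpace ℝ (Fin M) → ℝ :=
    fun v => ‖(K.orthogonalProjectionOnto v : EuclideanSpace ℝ (Fin M))‖ ^ 2 with hpf_def
  have hpnn : ∀ v, 0 ≤ pf v := fun v => sq_nonneg _
  set pw := pf what with hpw_def
  -- basic inequalities
  have h1 : ∀ n, E (w n) + η n * pf (w n) ≤ E what + η n * pw := by
    intro n
    have := isMinOn_iff.mp (hwmin n) what hwhatmem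
    rwa [hEη, hEη] at this
  have h2 : ∀ n, E what ≤ E (w n) := fun n => isMinOn_iff.mp hwhatmin (w n) (hwmem n)
  have h3 : ∀ n, pf (w n) ≤ pw := by
    intro n
    have hmul : η n * pf (w n) ≤ η n * pw := by linarith [h1 n, h2 n]
    exact le_of_mul_le_mul_left hmul (hηpos n)
  have h4 : ∀ n, E (w n) ≤ E what + η n * pw := by
    intro n
    have := mul_nonneg (hηpos n).le (hpnn (w n))
    linarith [h1 n]
  set C0 := E what + η 0 * pw with hC0_def
  have hC0 : ∀ n, E (w n) ≤ C0 := by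
    intro n
    have hη0 : η n ≤ η 0 := hηanti.antitone (Nat.zero_le n)
    have := mul_le_mul_of_nonneg_right hη0 (hpnn what)
    have := h4 n
    rw [hC0_def]
    linarith
  -- E (w n) → E what
  have hEconv : Tendsto (fun n => E (w n)) atTop (nhds (E what)) := by
    apply tendsto_of_tendsto_of_tendsto_of_le_of_le
      (g := fun _ => E what) (h := fun n => E what + η n * pw)
      tendsto_const_nhds
      (by simpa using (tendsto_const_nhds (x := E what)).add (hηlim.mul_const pw))
      h2 h4
  -- continuity facts
  have hcoord : ∀ i, Continuous fun v : EuclideanSpace ℝ (Fin M) => v i :=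
    fun i => (EuclideanSpace.proj i : EuclideanSpace ℝ (Fin M) →L[ℝ] ℝ).continuous
  have hcontdet : Continuous fdet := by
    have h1' : Continuous fun v : EuclideanSpace ℝ (Fin M) => (fun i => v i) :=
      continuous_pi hcoord
    exact ((continuous_const.matrix_mul h1'.matrix_diagonal).matrix_mul
      continuous_const).matrix_det
  have hcontsum : Continuous fun v : EuclideanSpace ℝ (Fin M) => ∑ i, v i :=
    continuous_finset_sum _ fun i _ => hcoord i
  have hcontp : Continuous pf :=
    ((continuous_subtype_val.comp (K.orthogonalProjectionOnto).continuous).norm).pow 2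
  -- determinant growth bound (coercivity)
  obtain ⟨C, hC⟩ := (isCompact_sphere (0 : EuclideanSpace ℝ (Fin M)) 1).exists_bound_of_continuousOn
    hcontdet.continuousOn
  set C1 := max C 1 with hC1_def
  have hC1pos : (0:ℝ) < C1 := lt_of_lt_of_le one_pos (le_max_right C 1)
  have hC1b : ∀ u : EuclideanSpace ℝ (Fin M), ‖u‖ = 1 → fdet u ≤ C1 := by
    intro u hu
    have hmem : u ∈ Metric.sphere (0 : EuclideanSpace ℝ (Fin M)) 1 := by
      simpa [mem_sphere_zero_iff_norm] using hu
    calc fdet u ≤ ‖fdet u‖ := le_abs_self _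
      _ ≤ C := hC u hmem
      _ ≤ C1 := le_max_left C 1
  have hscale : ∀ (c : ℝ) (u : EuclideanSpace ℝ (Fin M)), fdet (c • u) = c ^ N * fdet u := by
    intro c u
    have hco : (fun i => (c • u) i) = c • (fun i => u i) := by
      funext i; simp [PiLp.smul_apply, smul_eq_mul]
    rw [hfdet_def]
    simp only []
    rw [hco, Matrix.diagonal_smul, Matrix.mul_smul, Matrix.smul_mul, Matrix.det_smul,
      Fintype.card_fin]
  have hdet_le : ∀ v : EuclideanSpace ℝ (Fin M), v ≠ 0 → fdet v ≤ C1 * ‖v‖ ^ N := by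
    intro v hv
    have hn : 0 < ‖v‖ := norm_pos_iff.mpr hv
    set u : EuclideanSpace ℝ (Fin M) := ‖v‖⁻¹ • v with hu_def
    have hu : ‖u‖ = 1 := by
      rw [hu_def, norm_smul, norm_inv, norm_norm]
      exact inv_mul_cancel₀ hn.ne'
    have hveq : v = ‖v‖ • u := by rw [hu_def, smul_inv_smul₀ hn.ne']
    calc fdet v = ‖v‖ ^ N * fdet u := by conv_lhs => rw [hveq, hscale]
      _ ≤ ‖v‖ ^ N * C1 := mul_le_mul_of_nonneg_left (hC1b u hu) (pow_nonneg hn.le N)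
      _ = C1 * ‖v‖ ^ N := mul_comm _ _
  have hfdet0 : fdet 0 = 0 := by
    rw [hfdet_def]
    simp only []
    have h0 : (fun i => (0 : EuclideanSpace ℝ (Fin M)) i) = (fun _ : Fin M => (0:ℝ)) := by
      funext i; rfl
    rw [h0, show (diagonal fun _ : Fin M => (0:ℝ)) = 0 from Matrix.diagonal_zero,
      Matrix.mul_zero, Matrix.zero_mul, Matrix.det_zero]
  -- boundedness of the sequence
  set RR := 2 * max (C0 + Real.log C1 / (N:ℝ)) 1 with hRR_def
  have hbd : ∀ n, ‖w n‖ ≤ RR := by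
    intro n
    obtain ⟨hvpos, hvdet⟩ := hwmem n
    rw [hfd] at hvdet
    have hv0 : w n ≠ 0 := by
      intro h; rw [h, hfdet0] at hvdet; exact lt_irrefl 0 hvdet
    have ht : 0 < ‖w n‖ := norm_pos_iff.mpr hv0
    have hle := hdet_le (w n) hv0
    have hlog : Real.log (fdet (w n)) ≤ Real.log C1 + (N:ℝ) * Real.log ‖w n‖ := by
      calc Real.log (fdet (w n)) ≤ Real.log (C1 * ‖w n‖ ^ N) := Real.log_le_log hvdet hle
        _ = Real.log C1 + (N:ℝ) * Real.log ‖w n‖ := by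
          rw [Real.log_mul hC1pos.ne' (pow_pos ht N).ne', Real.log_pow]
    have hsum : ‖w n‖ ≤ ∑ i, w n i := aux_norm_le_sum (w n) hvpos
    have hEn := hC0 n
    rw [hE, hfd] at hEn
    have hmm := mul_le_mul_of_nonneg_left hlog (by positivity : (0:ℝ) ≤ 1/(N:ℝ))
    have hid1 : (1/(N:ℝ)) * ((N:ℝ) * Real.log ‖w n‖) = Real.log ‖w n‖ := by
      field_simp
    have key : ‖w n‖ - Real.log ‖w n‖ ≤ C0 + Real.log C1 / (N:ℝ) := by
      have h5 : (1/(N:ℝ)) * (Real.log C1 + (N:ℝ) * Real.log ‖w n‖)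
          = Real.log C1 / (N:ℝ) + Real.log ‖w n‖ := by
        rw [mul_add, hid1]; ring
      nlinarith [hmm, hEn, hsum]
    have hlogle : Real.log ‖w n‖ ≤ ‖w n‖ / 2 := by
      nlinarith [sq_nonneg (Real.sqrt ‖w n‖ - 2), Real.sq_sqrt ht.le,
        Real.log_sqrt ht.le, Real.log_le_sub_one_of_pos (Real.sqrt_pos.mpr ht),
        Real.sqrt_nonneg ‖w n‖]
    have : ‖w n‖ ≤ 2 * (C0 + Real.log C1 / (N:ℝ)) := by linarith
    calc ‖w n‖ ≤ 2 * (C0 + Real.log C1 / (N:ℝ)) := this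
      _ ≤ RR := by
        rw [hRR_def]
        have := le_max_left (C0 + Real.log C1 / (N:ℝ)) 1
        linarith
  -- lower bound on determinants
  set ε := Real.exp (-(N:ℝ) * C0) with hε_def
  have hdlb : ∀ n, ε ≤ fdet (w n) := by
    intro n
    obtain ⟨hvpos, hvdet⟩ := hwmem n
    rw [hfd] at hvdet
    have hEn := hC0 n
    rw [hE, hfd] at hEn
    have hsumnn : 0 ≤ ∑ i, w n i := Finset.sum_nonneg fun i _ => hvpos i
    have hlb : -(N:ℝ) * C0 ≤ Real.log (fdet (w n)) := by
      have h6 : -(1/(N:ℝ)) * Real.log (fdet (w n)) ≤ C0 := by linarith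
      have h7 := mul_le_mul_of_nonneg_left h6 hNpos.le
      have h8 : (N:ℝ) * (-(1/(N:ℝ)) * Real.log (fdet (w n))) = -Real.log (fdet (w n)) := by
        field_simp
      rw [h8] at h7
      linarith
    calc ε ≤ Real.exp (Real.log (fdet (w n))) := Real.exp_le_exp.mpr hlb
      _ = fdet (w n) := Real.exp_log hvdet
  -- main subsequence argument
  apply tendsto_of_subseq_tendsto
  intro ns hns
  have hball : ∀ k, w (ns k) ∈ Metric.closedBall (0 : EuclideanSpace ℝ (Fin M)) RR := by
    intro k
    simpa [Metric.mem_closedBall, dist_zero_right] using hbd (ns k)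
  obtain ⟨a, -, φ, hφ, hlim⟩ :=
    tendsto_subseq_of_bounded (Metric.isBounded_closedBall
      (x := (0 : EuclideanSpace ℝ (Fin M))) (r := RR)) hball
  suffices h : a = what by
    exact ⟨φ, by rw [← h]; exact hlim⟩
  -- identification of the limit
  set ψ : ℕ → ℕ := fun k => ns (φ k) with hψ_def
  have hψlim : Tendsto (fun k => w (ψ k)) atTop (nhds a) := hlim
  have hψat : Tendsto ψ atTop atTop := hns.comp hφ.tendsto_atTop
  have ha_nonneg : ∀ i, 0 ≤ a i := by
    intro i
    exact ge_of_tendsto' (((hcoord i).tendsto a).comp hψlim)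
      (fun k => (hwmem (ψ k)).1 i)
  have hdeta : ε ≤ fdet a :=
    ge_of_tendsto' ((hcontdet.tendsto a).comp hψlim) (fun k => hdlb (ψ k))
  have hdeta' : 0 < fdet a := lt_of_lt_of_le (Real.exp_pos _) hdeta
  have haS : a ∈ {v : EuclideanSpace ℝ (Fin M) |
      (∀ i, 0 ≤ v i) ∧ 0 < (G (fun i => v i)).det} := by
    refine ⟨ha_nonneg, ?_⟩
    rw [hfd]; exact hdeta'
  -- E along the subsequence converges to E a
  have hEfun : ∀ v : EuclideanSpace ℝ (Fin M),
      E v = -(1/(N:ℝ)) * Real.log (fdet v) + ∑ i, v i := fun v => by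
    rw [hE, hfd]
  have hEa : Tendsto (fun k => E (w (ψ k))) atTop (nhds (E a)) := by
    have hd : Tendsto (fun k => fdet (w (ψ k))) atTop (nhds (fdet a)) :=
      (hcontdet.tendsto a).comp hψlim
    have hl : Tendsto (fun k => Real.log (fdet (w (ψ k)))) atTop (nhds (Real.log (fdet a))) :=
      ((Real.continuousAt_log hdeta'.ne').tendsto).comp hd
    have hs : Tendsto (fun k => ∑ i, w (ψ k) i) atTop (nhds (∑ i, a i)) :=
      (hcontsum.tendsto a).comp hψlim
    have := (hl.const_mul (-(1/(N:ℝ)))).add hs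
    simp only [hEfun]
    exact this
  have hEsub : Tendsto (fun k => E (w (ψ k))) atTop (nhds (E what)) := hEconv.comp hψat
  have hEaeq : E a = E what := tendsto_nhds_unique hEa hEsub
  have ha_min : IsMinOn E {v : EuclideanSpace ℝ (Fin M) |
      (∀ i, 0 ≤ v i) ∧ 0 < (G (fun i => v i)).det} a := by
    rw [isMinOn_iff]
    intro x hx
    rw [hEaeq]
    exact isMinOn_iff.mp hwhatmin x hx
  have hpa_le : pf a ≤ pw :=
    le_of_tendsto' ((hcontp.tendsto a).comp hψlim) (fun k => h3 (ψ k))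
  have hpa_ge : pw ≤ pf a := hwhatproj a haS ha_min
  have hpa : pf a = pw := le_antisymm hpa_le hpa_ge
  -- uniqueness of the projection-minimal minimizer
  by_contra hne
  set A₁ := Vᵀ * diagonal (fun i => what i) * V with hA₁_def
  set B₁ := Vᵀ * diagonal (fun i => a i) * V with hB₁_def
  have hA₁psd : A₁.PosSemidef := by
    have hD : (diagonal (fun i => what i)).PosSemidef :=
      Matrix.posSemidef_diagonal_iff.mpr hwhatmem.1
    have h := hD.conjTranspose_mul_mul_same V
    rwa [Matrix.conjTranspose_eq_transpose_of_trivial] at h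
  have hB₁psd : B₁.PosSemidef := by
    have hD : (diagonal (fun i => a i)).PosSemidef :=
      Matrix.posSemidef_diagonal_iff.mpr ha_nonneg
    have h := hD.conjTranspose_mul_mul_same V
    rwa [Matrix.conjTranspose_eq_transpose_of_trivial] at h
  have hdetA₁ : 0 < A₁.det := by
    have := hwhatmem.2; rwa [hfd] at this
  have hdetB₁ : 0 < B₁.det := hdeta'
  have hA₁pd : A₁.PosDef := aux_posDef_of_det hA₁psd hdetA₁.ne'
  have hB₁pd : B₁.PosDef := aux_posDef_of_det hB₁psd hdetB₁.ne'
  obtain ⟨hmidpos, hmidle, hmideq⟩ := aux_logdet hA₁pd hB₁pd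
  set m : EuclideanSpace ℝ (Fin M) := (2⁻¹ : ℝ) • (what + a) with hm_def
  have hmcoords : ∀ i, m i = (what i + a i) / 2 := by
    intro i
    rw [hm_def]
    simp [PiLp.smul_apply, PiLp.add_apply]
    ring
  have hGm : Vᵀ * diagonal (fun i => m i) * V = (2⁻¹ : ℝ) • (A₁ + B₁) := by
    have hco : (fun i => m i) = fun i => 2⁻¹ * what i + 2⁻¹ * a i := by
      funext i
      rw [hmcoords i]
      ring
    have hdco : diagonal (fun i => m i)
        = (2⁻¹ : ℝ) • (diagonal (fun i => what i) + diagonal (fun i => a i)) := by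
      rw [hco, aux_diag_comb, smul_add]
    rw [hdco, Matrix.mul_smul, Matrix.smul_mul, Matrix.mul_add, Matrix.add_mul,
      hA₁_def, hB₁_def]
  have hm_mem : m ∈ {v : EuclideanSpace ℝ (Fin M) |
      (∀ i, 0 ≤ v i) ∧ 0 < (G (fun i => v i)).det} := by
    constructor
    · intro i
      rw [hmcoords i]
      have := hwhatmem.1 i
      have := ha_nonneg i
      linarith
    · rw [hfd]
      show 0 < fdet m
      rw [hfdet_def]
      simp only []
      rw [hGm]
      exact hmidpos
  have hsum_m : ∑ i, m i = ((∑ i, what i) + ∑ i, a i) / 2 := by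
    calc ∑ i, m i = ∑ i, ((what i + a i) / 2) := Finset.sum_congr rfl fun i _ => hmcoords i
      _ = ((∑ i, what i) + ∑ i, a i) / 2 := by
        rw [← Finset.sum_add_distrib, Finset.sum_div]
  have hfdm : fdet m = ((2⁻¹ : ℝ) • (A₁ + B₁)).det := by
    rw [hfdet_def]; simp only []; rw [hGm]
  have hfdw : fdet what = A₁.det := rfl
  have hfda : fdet a = B₁.det := rfl
  -- E m ≤ (E what + E a)/2 = E what, with equality forcing matrix equality
  have hEm_le : E m ≤ E what := by
    rw [hEfun m, hfdm, hsum_m]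
    have h9 := mul_le_mul_of_nonneg_left hmidle (by positivity : (0:ℝ) ≤ 1/(N:ℝ))
    have hEw := hEfun what
    have hEa' := hEfun a
    rw [hfdw] at hEw
    rw [hfda] at hEa'
    have : E what = (E what + E a) / 2 := by rw [hEaeq]; ring
    rw [this, hEw, hEa']
    linarith
  have hEm_ge : E what ≤ E m := isMinOn_iff.mp hwhatmin m hm_mem
  have hEmeq : E m = E what := le_antisymm hEm_le hEm_ge
  -- extract the log equality
  have hlogeq : (Real.log A₁.det + Real.log B₁.det) / 2
      = Real.log (((2⁻¹ : ℝ) • (A₁ + B₁)).det) := by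
    have hEm := hEfun m
    rw [hfdm, hsum_m] at hEm
    have hEw := hEfun what
    have hEa' := hEfun a
    rw [hfdw] at hEw
    rw [hfda] at hEa'
    have hhalf : E what = (E what + E a) / 2 := by rw [hEaeq]; ring
    have h10 : (1/(N:ℝ)) * Real.log (((2⁻¹ : ℝ) • (A₁ + B₁)).det)
        = (1/(N:ℝ)) * ((Real.log A₁.det + Real.log B₁.det) / 2) := by
      rw [hEmeq, hhalf, hEw, hEa'] at hEm
      linarith
    have h11 : (1/(N:ℝ)) ≠ 0 := by positivity
    have h12 := mul_left_cancel₀ h11 h10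
    linarith
  have hmats : A₁ = B₁ := hmideq hlogeq
  -- difference lies in K
  have hKmem : what - a ∈ K := by
    rw [hK]
    have hco2 : (fun i => (what - a) i) = fun i => (1:ℝ) * what i + (-1:ℝ) * a i := by
      funext i
      simp [PiLp.sub_apply]
      ring
    have hdco2 : diagonal (fun i => (what - a) i)
        = diagonal (fun i => what i) - diagonal (fun i => a i) := by
      rw [hco2, aux_diag_comb, one_smul, neg_one_smul, ← sub_eq_add_neg]
    rw [hdco2, Matrix.mul_sub, Matrix.sub_mul, ← hA₁_def, ← hB₁_def, hmats, sub_self]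
  -- the projections agree
  set Pa := (K.orthogonalProjectionOnto what : EuclideanSpace ℝ (Fin M)) with hPa_def
  set Pb := (K.orthogonalProjectionOnto a : EuclideanSpace ℝ (Fin M)) with hPb_def
  have hm_min : IsMinOn E {v : EuclideanSpace ℝ (Fin M) |
      (∀ i, 0 ≤ v i) ∧ 0 < (G (fun i => v i)).det} m := by
    rw [isMinOn_iff]
    intro x hx
    rw [hEmeq]
    exact isMinOn_iff.mp hwhatmin x hx
  have hpm : pw ≤ pf m := hwhatproj m hm_mem hm_min
  have hm_proj : (K.orthogonalProjectionOnto m : EuclideanSpace ℝ (Fin M))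
      = (2⁻¹ : ℝ) • (Pa + Pb) := by
    rw [hm_def, _root_.map_smul, map_add]
    push_cast
    ring_nf
    rfl
  have hPaPb : Pa = Pb := by
    have hpar := parallelogram_law_with_norm ℝ Pa Pb
    have hpfm : pf m = ‖(2⁻¹ : ℝ) • (Pa + Pb)‖ ^ 2 := by
      rw [hpf_def]; simp only []; rw [hm_proj]
    have hsm : ‖(2⁻¹ : ℝ) • (Pa + Pb)‖ = 2⁻¹ * ‖Pa + Pb‖ := by
      rw [norm_smul]; norm_num
    have hpfa : pf a = ‖Pb‖ ^ 2 := rfl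
    have hpfw : pw = ‖Pa‖ ^ 2 := rfl
    have h0 : ‖Pa - Pb‖ * ‖Pa - Pb‖ ≤ 0 := by
      rw [hpfm, hsm] at hpm
      nlinarith [norm_nonneg (Pa + Pb), norm_nonneg (Pa - Pb), hpa, hpfa, hpfw]
    have hz : ‖Pa - Pb‖ = 0 := by nlinarith [norm_nonneg (Pa - Pb)]
    rw [norm_eq_zero, sub_eq_zero] at hz
    exact hz
  -- conclude what = a, contradiction
  apply hne
  have h1' : (K.orthogonalProjectionOnto (what - a) : EuclideanSpace ℝ (Fin M)) = what - a :=
    congrArg Subtype.val (K.orthogonalProjectionOnto_mem_subspace_eq_self ⟨what - a, hKmem⟩)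
  rw [map_sub] at h1'
  push_cast at h1'
  rw [← hPa_def, ← hPb_def, hPaPb, sub_self] at h1'
  have := h1'.symm
  rw [sub_eq_zero] at this
  exact this.symm
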